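/- Let R be an integral domain, S₁,…,S_n ⊆ R finite subsets each of cardinality N, and r ∈ R[x₁,…,x_n] a nonzero polynomial of total degree at most d. Then r has at most d·N^{n−1} zeros in S₁ × S₂ × ⋯ × S_n. -/

import Mathlib

open MvPolynomial Finset

private lemma sz_univ {R : Type*} [CommRing R] [IsDomain R] [DecidableEq R] (T : Finset R)
    (q : Polynomial R) (hq : q ≠ 0) :
    (T.filter fun y => q.eval y = 0).card ≤ q.natDegree := by
  calc (T.filter fun y => q.eval y = 0).card ≤ q.roots.toFinset.card := by
        apply Finset.card_le_card
        intro y hy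
        simp only [mem_filter] at hy
        simp [Multiset.mem_toFinset, Polynomial.mem_roots, hq, Polynomial.IsRoot, hy.2]
    _ ≤ Multiset.card q.roots := q.roots.toFinset_card_le
    _ ≤ q.natDegree := q.card_roots'

private lemma sz_aux {R : Type*} [CommRing R] [IsDomain R] [DecidableEq R] :
    ∀ (n N d : ℕ) (S : Fin n → Finset R), (∀ i, (S i).card = N) →
    ∀ r : MvPolynomial (Fin n) R, r ≠ 0 → r.totalDegree ≤ d →
    ((Fintype.piFinset S).filter fun a => eval a r = 0).card * N ≤ d * N ^ n := by
  intro n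
  induction n with
  | zero =>
    intro N d S hS r hr hd
    obtain ⟨a, rfl⟩ := MvPolynomial.C_surjective (Fin 0) r
    have ha : a ≠ 0 := fun h => hr (by simp [h])
    have : ((Fintype.piFinset S).filter fun a' => eval a' (C a) = 0) = ∅ := by
      apply Finset.filter_eq_empty_iff.2
      intro x _
      simpa using ha
    rw [this]
    simp
  | succ n ih =>
    intro N d S hS r hr hd
    set P := finSuccEquiv R n r with hP
    have hP0 : P ≠ 0 := by
      rw [hP]
      intro h
      exact hr ((finSuccEquiv R n).injective (by simp [h]))
    set k := P.natDegree with hk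
    set c := P.leadingCoeff with hc
    have hc0 : c ≠ 0 := Polynomial.leadingCoeff_ne_zero.2 hP0
    have hck : P.coeff k = c := rfl
    have hkd : c.totalDegree + k ≤ d := by
      refine le_trans ?_ hd
      exact totalDegree_coeff_finSuccEquiv_add_le r k (by rw [hck]; exact hc0)
    have hkd' : k ≤ d := le_trans (Nat.le_add_left _ _) hkd
    have hcd : c.totalDegree ≤ d - k := Nat.le_sub_of_add_le hkd
    have hTcard : (Fintype.piFinset (fun i : Fin n => S i.succ)).card ≤ N ^ n := by
      rw [Fintype.card_piFinset]
      exact le_of_eq (by simp [hS])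
    -- zero set on product side
    have key : ((Fintype.piFinset S).filter fun a => eval a r = 0).card =
        (((S 0) ×ˢ Fintype.piFinset (fun i : Fin n => S i.succ)).filter
          fun p : R × (Fin n → R) => eval (Fin.cons p.1 p.2) r = 0).card := by
      refine Finset.card_bij' (fun a _ => ((a 0, Fin.tail a) : R × (Fin n → R)))
        (fun p _ => Fin.cons p.1 p.2) ?_ ?_ ?_ ?_
      · intro a ha
        simp only [mem_filter, Fintype.mem_piFinset] at ha
        simp only [mem_filter, Finset.mem_product, Fintype.mem_piFinset]
        refine ⟨⟨ha.1 0, fun i : Fin n => ha.1 i.succ⟩, ?_⟩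
        rw [Fin.cons_self_tail]; exact ha.2
      · intro p hp
        simp only [mem_filter, Finset.mem_product, Fintype.mem_piFinset] at hp
        simp only [mem_filter, Fintype.mem_piFinset]
        refine ⟨fun i => ?_, hp.2⟩
        refine Fin.cases ?_ ?_ i
        · simpa using hp.1.1
        · intro j; simpa using hp.1.2 j
      · intro a _; simp [Fin.cons_self_tail]
      · intro p _; simp
    have hZcN : ((Fintype.piFinset (fun i : Fin n => S i.succ)).filter
        fun s => eval s c = 0).card * N ≤ (d - k) * N ^ n :=
      ih N (d - k) _ (fun i : Fin n => hS i.succ) c hc0 hcd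
    -- split
    have split : (((S 0) ×ˢ Fintype.piFinset (fun i : Fin n => S i.succ)).filter
          fun p : R × (Fin n → R) => eval (Fin.cons p.1 p.2) r = 0).card ≤
        (((S 0) ×ˢ Fintype.piFinset (fun i : Fin n => S i.succ)).filter
          fun p : R × (Fin n → R) => eval p.2 c = 0).card +
        (((S 0) ×ˢ Fintype.piFinset (fun i : Fin n => S i.succ)).filter
          fun p : R × (Fin n → R) => eval p.2 c ≠ 0 ∧ eval (Fin.cons p.1 p.2) r = 0).card := by
      refine le_trans (Finset.card_le_card ?_) (Finset.card_union_le _ _)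
      intro p hp
      simp only [mem_filter, Finset.mem_union] at hp ⊢
      by_cases h : eval p.2 c = 0
      · exact Or.inl ⟨hp.1, h⟩
      · exact Or.inr ⟨hp.1, h, hp.2⟩
    have part1 : (((S 0) ×ˢ Fintype.piFinset (fun i : Fin n => S i.succ)).filter
          fun p : R × (Fin n → R) => eval p.2 c = 0).card =
        N * ((Fintype.piFinset (fun i : Fin n => S i.succ)).filter
          fun s => eval s c = 0).card := by
      rw [show (((S 0) ×ˢ Fintype.piFinset (fun i : Fin n => S i.succ)).filter
          fun p : R × (Fin n → R) => eval p.2 c = 0) =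
          (S 0) ×ˢ ((Fintype.piFinset (fun i : Fin n => S i.succ)).filter
          fun s => eval s c = 0) from by ext p; simp [and_assoc]]
      rw [Finset.card_product, hS 0]
    have part2 : (((S 0) ×ˢ Fintype.piFinset (fun i : Fin n => S i.succ)).filter
          fun p : R × (Fin n → R) => eval p.2 c ≠ 0 ∧ eval (Fin.cons p.1 p.2) r = 0).card
        ≤ N ^ n * k := by
      set B := ((S 0) ×ˢ Fintype.piFinset (fun i : Fin n => S i.succ)).filter
          fun p : R × (Fin n → R) => eval p.2 c ≠ 0 ∧ eval (Fin.cons p.1 p.2) r = 0 with hB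
      have hBsum : B.card = ∑ s ∈ Fintype.piFinset (fun i : Fin n => S i.succ),
          (B.filter fun p : R × (Fin n → R) => p.2 = s).card := by
        apply Finset.card_eq_sum_card_fiberwise
        intro p hp
        simp only [Finset.mem_coe, hB, mem_filter, Finset.mem_product] at hp
        exact hp.1.2
      rw [hBsum]
      refine le_trans (Finset.sum_le_card_nsmul _ _ k ?_)
        (by simpa [mul_comm] using Nat.mul_le_mul_right k hTcard)
      intro s hs
      by_cases hsc : eval s c = 0
      · have hemp : B.filter (fun p : R × (Fin n → R) => p.2 = s) = ∅ := by
          apply Finset.filter_eq_empty_iff.2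
          rintro p hp rfl
          simp only [hB, mem_filter] at hp
          exact hp.2.1 hsc
        simp [hemp]
      · -- univariate polynomial
        set q := P.map (eval s) with hq
        have hq0 : q ≠ 0 := fun h => hsc (by
          have := congrArg (fun u => Polynomial.coeff u k) h
          simpa [hq, Polynomial.coeff_map, hck] using this)
        have hqdeg : q.natDegree ≤ k := Polynomial.natDegree_map_le
        calc (B.filter fun p : R × (Fin n → R) => p.2 = s).card
            ≤ ((S 0).filter fun y => q.eval y = 0).card := by
              apply Finset.card_le_card_of_injOn (fun p => p.1)
              · rintro p hp
                simp only [Finset.mem_coe, hB, mem_filter, Finset.mem_product] at hp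
                obtain ⟨⟨⟨h1, _⟩, _, h3⟩, rfl⟩ := hp
                simp only [Finset.mem_coe, mem_filter]
                refine ⟨h1, ?_⟩
                rw [hq, ← eval_eq_eval_mv_eval']
                exact h3
              · rintro p hp p' hp' h
                simp only [coe_filter, Set.mem_setOf_eq] at hp hp'
                exact Prod.ext h (hp.2.trans hp'.2.symm)
          _ ≤ q.natDegree := sz_univ _ _ hq0
          _ ≤ k := hqdeg
    calc ((Fintype.piFinset S).filter fun a => eval a r = 0).card * N
        ≤ (N * ((Fintype.piFinset (fun i : Fin n => S i.succ)).filter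
            fun s => eval s c = 0).card + N ^ n * k) * N := by
          rw [key]
          exact Nat.mul_le_mul_right N (le_trans split
            (by rw [part1]; exact Nat.add_le_add_left part2 _))
      _ = N * (((Fintype.piFinset (fun i : Fin n => S i.succ)).filter
            fun s => eval s c = 0).card * N) + k * N ^ (n + 1) := by ring
      _ ≤ N * ((d - k) * N ^ n) + k * N ^ (n + 1) :=
          Nat.add_le_add_right (Nat.mul_le_mul_left N hZcN) _
      _ = ((d - k) + k) * N ^ (n + 1) := by ring
      _ = d * N ^ (n + 1) := by rw [Nat.sub_add_cancel hkd']

theorem stmt16 (R : Type*) [CommRing R] [IsDomain R] [DecidableEq R]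
    (n N d : ℕ) (S : Fin n → Finset R) (hS : ∀ i, (S i).card = N)
    (r : MvPolynomial (Fin n) R) (hr : r ≠ 0) (hd : r.totalDegree ≤ d) :
    ((Fintype.piFinset S).filter fun a => eval a r = 0).card ≤ d * N ^ (n - 1) := by
  match n with
  | 0 =>
    obtain ⟨a, rfl⟩ := MvPolynomial.C_surjective (Fin 0) r
    have ha : a ≠ 0 := fun h => hr (by simp [h])
    have h0 : ((Fintype.piFinset S).filter fun a' => eval a' (C a) = 0) = ∅ := by
      apply Finset.filter_eq_empty_iff.2
      intro x _
      simpa using ha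
    rw [h0]
    simp
  | m + 1 =>
    rcases Nat.eq_zero_or_pos N with hN | hN
    · have : Fintype.piFinset S = ∅ := by
        rw [Fintype.piFinset_eq_empty]
        exact ⟨0, Finset.card_eq_zero.1 (by rw [hS 0, hN])⟩
      simp [this]
    · have h := sz_aux (m+1) N d S hS r hr hd
      have : d * N ^ (m + 1) = d * N ^ m * N := by ring
      rw [this] at h
      simpa using Nat.le_of_mul_le_mul_right h hN
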